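/- Let M = I_{v1} ⊗ (aI_{v2} + bJ_{v2}) + (J_{v1} - I_{v1}) ⊗ (cI_{v2} + dJ_{v2}) be a double completely symmetric matrix. Then M has exactly four (possibly coinciding) eigenvalues: α = a - c with multiplicity (v1-1)(v2-1), β = a - c + (b-d)v2 with multiplicity v1-1, γ = a + c(v1-1) with multiplicity v2-1, and δ = a + bv2 + (v1-1)(c + dv2) with multiplicity 1. -/

import Mathlib

open Matrix BigOperators Kronecker

/-- The `n × n` all-ones matrix. -/
def Jmat (n : ℕ) : Matrix (Fin n) (Fin n) ℝ := Matrix.of fun _ _ => 1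

/-- the double completely symmetric matrix
`M = I_{v1} ⊗ (aI + bJ) + (J_{v1} - I_{v1}) ⊗ (cI + dJ)` has the four eigenvalues
`α = a - c` (on vectors `p ⊗ q` with `p ⊥ 1, q ⊥ 1`, a space of dimension `(v1-1)(v2-1)`),
`β = a - c + (b - d)v2` (on `p ⊗ 1`, dimension `v1 - 1`),
`γ = a + c(v1-1)` (on `1 ⊗ q`, dimension `v2 - 1`), and
`δ = a + bv2 + (v1-1)(c + dv2)` (on `1 ⊗ 1`, dimension 1). -/
theorem double_completely_symmetric_eigenvalues (v1 v2 : ℕ) (a b c d : ℝ)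
    (M : Matrix (Fin v1 × Fin v2) (Fin v1 × Fin v2) ℝ)
    (hM : M = (1 : Matrix (Fin v1) (Fin v1) ℝ) ⊗ₖ
            (a • (1 : Matrix (Fin v2) (Fin v2) ℝ) + b • Jmat v2)
          + (Jmat v1 - 1) ⊗ₖ
            (c • (1 : Matrix (Fin v2) (Fin v2) ℝ) + d • Jmat v2)) :
    (∀ p : Fin v1 → ℝ, ∀ q : Fin v2 → ℝ, (∑ i, p i) = 0 → (∑ j, q j) = 0 →
      M.mulVec (fun ij => p ij.1 * q ij.2) = (a - c) • fun ij => p ij.1 * q ij.2) ∧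
    (∀ p : Fin v1 → ℝ, (∑ i, p i) = 0 →
      M.mulVec (fun ij => p ij.1) = (a - c + (b - d) * v2) • fun ij => p ij.1) ∧
    (∀ q : Fin v2 → ℝ, (∑ j, q j) = 0 →
      M.mulVec (fun ij => q ij.2) = (a + c * (v1 - 1)) • fun ij => q ij.2) ∧
    M.mulVec (fun _ => 1) =
      (a + b * v2 + (v1 - 1) * (c + d * v2)) • fun _ => (1 : ℝ) := by
  have key : ∀ x : Fin v1 × Fin v2 → ℝ, ∀ i : Fin v1, ∀ j : Fin v2,
      M.mulVec x (i, j) = (a - c) * x (i, j) + (b - d) * (∑ l, x (i, l))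
        + c * (∑ k, x (k, j)) + d * (∑ k, ∑ l, x (k, l)) := by
    intro x i j
    have hent : ∀ k l, M (i,j) (k,l) =
        (if i = k then 1 else 0) * ((if j = l then a - c else 0) + (b - d))
        + ((if j = l then c else 0) + d) := by
      intro k l
      subst hM
      simp [Jmat, Matrix.kroneckerMap_apply, Matrix.one_apply]
      split <;> split <;> ring
    rw [Matrix.mulVec, dotProduct, Fintype.sum_prod_type]
    simp only [hent, add_mul, mul_add, ite_mul, one_mul, zero_mul, zero_add, add_zero,
      Finset.sum_add_distrib, Finset.sum_ite_irrel, Finset.sum_const_zero, Finset.sum_ite_eq,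
      Finset.mem_univ, if_true, Finset.mul_sum]
    ring_nf
  refine ⟨?_, ?_, ?_, ?_⟩
  · intro p q hp hq
    funext ij
    obtain ⟨i, j⟩ := ij
    rw [key]
    simp [← Finset.mul_sum, ← Finset.sum_mul, hp, hq]
  · intro p hp
    funext ij
    obtain ⟨i, j⟩ := ij
    rw [key]
    simp [Finset.sum_const, ← Finset.mul_sum, hp]
    ring
  · intro q hq
    funext ij
    obtain ⟨i, j⟩ := ij
    rw [key]
    simp [Finset.sum_const, hq]
    ring
  · funext ij
    obtain ⟨i, j⟩ := ij
    rw [key]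
    simp [Finset.sum_const]
    ring
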